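/- Let (p*, p⁺*, p⁻*, x*) be an optimal solution of the L-ESM subproblem and set X* = Σ_{m∈U} x_m*. If p_m⁺* > 0 for some m ∈ U, then p_m⁻* = 0, the stationarity relation w⁺ − w⁰ + a·X* + a·x_m* = 0 holds, p_m* = min(p̄_m, (w⁺ − b_m)/c_m), and consequently x_m* > min(β_m, γ_m). -/
import Mathlib


open Finset

variable {U : Type*} [Fintype U]

/-- A point `(p, p⁺, p⁻, x)` is feasible for the L-ESM subproblem:
power balance, generator bounds, and nonnegativity of grid trades. -/
def Feasible (D pbar : U → ℝ) (p pp pm x : U → ℝ) : Prop :=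
  ∀ m : U, D m + x m + pm m = p m + pp m ∧
    0 ≤ p m ∧ p m ≤ pbar m ∧ 0 ≤ pp m ∧ 0 ≤ pm m

/-- Objective of the L-ESM subproblem at base price `w0`. -/
noncomputable def Objective (c b : U → ℝ) (wplus wminus a w0 : ℝ)
    (p pp pm x : U → ℝ) : ℝ :=
  (∑ m : U, (c m / 2 * (p m) ^ 2 + b m * p m + wplus * pp m
      - wminus * pm m - w0 * x m))
    + a / 2 * ∑ m : U, (x m) ^ 2 + a / 2 * (∑ m : U, x m) ^ 2

/-- `(p, p⁺, p⁻, x)` is an optimal solution of the L-ESM subproblem. -/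
noncomputable def IsOptimal (c b D pbar : U → ℝ) (wplus wminus a w0 : ℝ)
    (p pp pm x : U → ℝ) : Prop :=
  Feasible D pbar p pp pm x ∧
    ∀ q qp qm y : U → ℝ, Feasible D pbar q qp qm y →
      Objective c b wplus wminus a w0 p pp pm x ≤
        Objective c b wplus wminus a w0 q qp qm y

open scoped Classical in
/-- Single-coordinate perturbation of a vector. -/
noncomputable def upd (f : U → ℝ) (m : U) (v : ℝ) : U → ℝ :=
  fun j => if j = m then v else f j

open scoped Classical in
lemma sum_ite' (f : U → ℝ) (m : U) (v : ℝ) :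
    ∑ j : U, (if j = m then v else f j) = (∑ j : U, f j) - f m + v := by
  have h : (fun j => if j = m then v else f j) = Function.update f m v := by
    funext j; by_cases h : j = m <;> simp [Function.update, h]
  rw [h, Finset.sum_update_of_mem (Finset.mem_univ m),
    Finset.sum_sdiff_eq_sub (Finset.singleton_subset_iff.2 (Finset.mem_univ m))]
  simp; ring

lemma sum_term_upd (g : U → ℝ → ℝ) (f : U → ℝ) (m : U) (v : ℝ) :
    ∑ j : U, g j (upd f m v j)
      = (∑ j : U, g j (f j)) - g m (f m) + g m v := by
  classical
  rw [← sum_ite' (fun j => g j (f j)) m (g m v)]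
  refine Finset.sum_congr rfl fun j _ => ?_
  by_cases h : j = m
  · subst h; simp [upd]
  · simp [upd, h]

lemma obj_upd (c b : U → ℝ) (wplus wminus a w0 : ℝ) (p pp pm x : U → ℝ)
    (m : U) (p' pp' pm' x' : ℝ) :
    Objective c b wplus wminus a w0 (upd p m p') (upd pp m pp') (upd pm m pm') (upd x m x')
      = Objective c b wplus wminus a w0 p pp pm x
        + (c m / 2 * p' ^ 2 + b m * p' + wplus * pp' - wminus * pm' - w0 * x')
        - (c m / 2 * (p m) ^ 2 + b m * p m + wplus * pp m - wminus * pm m - w0 * x m)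
        + a / 2 * (x' ^ 2 - (x m) ^ 2)
        + a / 2 * (((∑ j : U, x j) - x m + x') ^ 2 - (∑ j : U, x j) ^ 2) := by
  classical
  unfold Objective
  have h1 : ∑ j : U, (c j / 2 * (upd p m p' j) ^ 2 + b j * (upd p m p' j)
      + wplus * (upd pp m pp' j) - wminus * (upd pm m pm' j) - w0 * (upd x m x' j))
      = (∑ j : U, (c j / 2 * (p j) ^ 2 + b j * p j + wplus * pp j - wminus * pm j - w0 * x j))
        - (c m / 2 * (p m) ^ 2 + b m * p m + wplus * pp m - wminus * pm m - w0 * x m)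
        + (c m / 2 * p' ^ 2 + b m * p' + wplus * pp' - wminus * pm' - w0 * x') := by
    rw [← sum_ite' (fun j => c j / 2 * (p j) ^ 2 + b j * p j + wplus * pp j
      - wminus * pm j - w0 * x j) m]
    refine Finset.sum_congr rfl fun j _ => ?_
    by_cases h : j = m
    · subst h; simp [upd]
    · simp [upd, h]
  have h2 : ∑ j : U, (upd x m x' j) ^ 2
      = (∑ j : U, (x j) ^ 2) - (x m) ^ 2 + x' ^ 2 :=
    sum_term_upd (fun _ t => t ^ 2) x m x'
  have h3 : ∑ j : U, upd x m x' j = (∑ j : U, x j) - x m + x' :=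
    sum_term_upd (fun _ t => t) x m x'
  rw [h1, h2, h3]; ring

lemma feas_upd (D pbar : U → ℝ) (p pp pm x : U → ℝ) (m : U) (p' pp' pm' x' : ℝ)
    (hf : Feasible D pbar p pp pm x)
    (hbal : D m + x' + pm' = p' + pp') (h0 : 0 ≤ p') (h1 : p' ≤ pbar m)
    (h2 : 0 ≤ pp') (h3 : 0 ≤ pm') :
    Feasible D pbar (upd p m p') (upd pp m pp') (upd pm m pm') (upd x m x') := by
  classical
  intro j
  by_cases h : j = m
  · subst h; simp [upd]; exact ⟨hbal, h0, h1, h2, h3⟩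
  · simp [upd, h]; exact hf j

lemma nonneg_slope {K A δ : ℝ} (hδ : 0 < δ) (hA : 0 ≤ A)
    (h : ∀ t, 0 < t → t ≤ δ → 0 ≤ K * t + A * t ^ 2) : 0 ≤ K := by
  by_contra hK
  push_neg at hK
  set t := min δ (-K / (A + 1)) with ht
  have htpos : 0 < t := lt_min hδ (div_pos (by linarith) (by linarith))
  have htle : t ≤ -K / (A + 1) := min_le_right _ _
  have := h t htpos (min_le_left _ _)
  have hAt : A * t ≤ A * (-K / (A + 1)) := mul_le_mul_of_nonneg_left htle hA
  have hdiv : A * (-K / (A + 1)) = (A / (A + 1)) * (-K) := by ring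
  have hfrac : A / (A + 1) < 1 := by
    rw [div_lt_one (by linarith)]; linarith
  have hlt : A / (A + 1) * -K < 1 * -K :=
    mul_lt_mul_of_pos_right hfrac (by linarith)
  have hAtlt : A * t < -K := by rw [hdiv] at hAt; linarith
  nlinarith [mul_pos htpos (show (0:ℝ) < -(K + A * t) by linarith)]

/-- if `p⁺_m > 0` at an optimum then prosumer `m` is in Mode 2:
`p⁻_m = 0`, the Mode-2 stationarity relation holds,
`p_m = min(p̄_m, (w⁺ − b_m)/c_m)`, and `x_m > min(β_m, γ_m)`. -/
theorem lesm_mode2_characterization [Nonempty U]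
    (c b D pbar : U → ℝ) (wplus wminus a w0 : ℝ)
    (hc : ∀ m, 0 < c m) (hpbar : ∀ m, 0 ≤ pbar m)
    (hb : ∀ m, 0 < b m) (hbw : ∀ m, b m < wminus)
    (hw : wminus < wplus) (ha : 0 < a)
    (p pp pm x : U → ℝ)
    (hopt : IsOptimal c b D pbar wplus wminus a w0 p pp pm x)
    (m : U) (hppm : 0 < pp m) :
    pm m = 0 ∧
    wplus - w0 + a * (∑ j : U, x j) + a * x m = 0 ∧
    p m = min (pbar m) ((wplus - b m) / c m) ∧
    min ((wplus - b m) / c m - D m) (pbar m - D m) < x m := by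
  obtain ⟨hfeas, hmin⟩ := hopt
  obtain ⟨hbal, hp0, hpub, hpp0, hpm0⟩ := hfeas m
  set S := ∑ j : U, x j with hS
  -- key variational inequality
  have key : ∀ p' pp' pm' x' : ℝ, D m + x' + pm' = p' + pp' → 0 ≤ p' → p' ≤ pbar m →
      0 ≤ pp' → 0 ≤ pm' →
      0 ≤ (c m / 2 * p' ^ 2 + b m * p' + wplus * pp' - wminus * pm' - w0 * x')
        - (c m / 2 * (p m) ^ 2 + b m * p m + wplus * pp m - wminus * pm m - w0 * x m)
        + a / 2 * (x' ^ 2 - (x m) ^ 2)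
        + a / 2 * ((S - x m + x') ^ 2 - S ^ 2) := by
    intro p' pp' pm' x' h1 h2 h3 h4 h5
    have hf' := feas_upd D pbar p pp pm x m p' pp' pm' x' hfeas h1 h2 h3 h4 h5
    have := hmin _ _ _ _ hf'
    rw [obj_upd] at this
    linarith
  -- Step 1 : pm m = 0
  have hpmm : pm m = 0 := by
    by_contra h
    have hpmpos : 0 < pm m := lt_of_le_of_ne hpm0 (Ne.symm h)
    set ε := min (pp m) (pm m) with hε
    have hεpos : 0 < ε := lt_min hppm hpmpos
    have h1 := key (p m) (pp m - ε) (pm m - ε) (x m)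
      (by linarith) hp0 hpub
      (by have := min_le_left (pp m) (pm m); linarith)
      (by have := min_le_right (pp m) (pm m); linarith)
    nlinarith [h1, hεpos, hw]
  -- Step 2 : stationarity
  have hstat : wplus - w0 + a * S + a * x m = 0 := by
    have hpos : ∀ t : ℝ, 0 < t → t ≤ pp m →
        0 ≤ (wplus - w0 + a * S + a * x m) * t + a * t ^ 2 := by
      intro t ht1 ht2
      have h1 := key (p m) (pp m + t) (pm m) (x m + t)
        (by linarith) hp0 hpub (by linarith) hpm0
      nlinarith [h1]
    have hneg : ∀ t : ℝ, 0 < t → t ≤ pp m →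
        0 ≤ (-(wplus - w0 + a * S + a * x m)) * t + a * t ^ 2 := by
      intro t ht1 ht2
      have h1 := key (p m) (pp m - t) (pm m) (x m - t)
        (by linarith) hp0 hpub (by linarith) hpm0
      nlinarith [h1]
    have h1 := nonneg_slope hppm ha.le hpos
    have h2 := nonneg_slope hppm ha.le hneg
    linarith
  -- slope facts for p m
  have hGneg : 0 < p m → c m * p m + b m - wplus ≤ 0 := by
    intro hppos
    have hn : ∀ t : ℝ, 0 < t → t ≤ p m →
        0 ≤ (-(c m * p m + b m - wplus)) * t + (c m / 2) * t ^ 2 := by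
      intro t ht1 ht2
      have h1 := key (p m - t) (pp m + t) (pm m) (x m)
        (by linarith) (by linarith) (by linarith) (by linarith) hpm0
      nlinarith [h1]
    have := nonneg_slope hppos (by linarith [(hc m).le] : (0:ℝ) ≤ c m / 2) hn
    linarith
  have hmain : p m = min (pbar m) ((wplus - b m) / c m) := by
    rcases lt_or_eq_of_le hpub with hlt | heq
    · -- interior in the upper bound: slope from above is ≥ 0
      have hδ : 0 < min (pbar m - p m) (pp m) := lt_min (by linarith) hppm
      have hp' : ∀ t : ℝ, 0 < t → t ≤ min (pbar m - p m) (pp m) →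
          0 ≤ (c m * p m + b m - wplus) * t + (c m / 2) * t ^ 2 := by
        intro t ht1 ht2
        have ht3 : t ≤ pbar m - p m := le_trans ht2 (min_le_left _ _)
        have ht4 : t ≤ pp m := le_trans ht2 (min_le_right _ _)
        have h1 := key (p m + t) (pp m - t) (pm m) (x m)
          (by linarith) (by linarith) (by linarith) (by linarith) hpm0
        nlinarith [h1]
      have hG1 : 0 ≤ c m * p m + b m - wplus :=
        nonneg_slope hδ (by linarith [(hc m).le] : (0:ℝ) ≤ c m / 2) hp'
      have hppos : 0 < p m := by nlinarith [hc m, hbw m, hw]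
      have hG2 := hGneg hppos
      have hG : c m * p m + b m - wplus = 0 := le_antisymm hG2 hG1
      have hval : p m = (wplus - b m) / c m := by
        have h' : wplus - b m = c m * p m := by linarith
        rw [h', mul_div_cancel_left₀ _ (hc m).ne']
      rw [hval, min_eq_right]
      rw [← hval]; linarith
    · -- p m = pbar m
      rcases eq_or_lt_of_le (hpbar m) with h0 | h0
      · have hq : (0:ℝ) ≤ (wplus - b m) / c m :=
          div_nonneg (by linarith [hbw m, hw, hb m]) (hc m).le
        rw [min_eq_left (by rw [← h0]; exact hq)]
        exact heq
      · have hppos : 0 < p m := by rw [heq]; exact h0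
        have hG2 := hGneg hppos
        have hle : pbar m ≤ (wplus - b m) / c m := by
          rw [le_div_iff₀ (hc m)]
          rw [heq] at hG2
          linarith [mul_comm (pbar m) (c m)]
        rw [min_eq_left hle]
        exact heq
  refine ⟨hpmm, hstat, hmain, ?_⟩
  -- Step 4
  have hx : x m = p m + pp m - D m := by rw [hpmm] at hbal; linarith
  have hmineq : min ((wplus - b m) / c m - D m) (pbar m - D m)
      = min (pbar m) ((wplus - b m) / c m) - D m := by
    rcases le_total (pbar m) ((wplus - b m) / c m) with h | h
    · rw [min_eq_left h, min_eq_right (by linarith)]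
    · rw [min_eq_right h, min_eq_left (by linarith)]
  rw [hmineq, ← hmain, hx]
  linarith
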